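/- arXiv:0909.1148 — 3 statements merged into one kernel-verified Lean document; each statement's English description precedes it below -/
import Mathlib

section
/- A coherent lower prevision P^N on L(X^N) is exchangeable if and only if every linear prevision dominating it is exchangeable; that is, P^N(πf − f) ≥ 0 for all gambles f and permutations π holds if and only if every linear prevision P with P ≥ P^N pointwise satisfies P(πf) = P(f) for all gambles f and permutations π. -/
/-- A coherent lower prevision on `L(X^N)` is exchangeable if and only if every
dominating linear prevision is exchangeable. -/
theorem exchangeable_iff_dominating_linear_previsions_exchangeable
    {X : Type*} [Fintype X] [Nonempty X] {N : ℕ} (hN : 1 ≤ N)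
    (P : ((Fin N → X) → ℝ) → ℝ)
    (h1 : ∀ f : (Fin N → X) → ℝ, (⨅ z, f z) ≤ P f)
    (h2 : ∀ f : (Fin N → X) → ℝ, ∀ c : ℝ, 0 ≤ c → P (c • f) = c * P f)
    (h3 : ∀ f g : (Fin N → X) → ℝ, P f + P g ≤ P (f + g)) :
    (∀ (f : (Fin N → X) → ℝ) (π : Equiv.Perm (Fin N)),
        0 ≤ P (fun z => f (z ∘ π) - f z)) ↔
    (∀ Q : ((Fin N → X) → ℝ) →ₗ[ℝ] ℝ,
        (∀ f : (Fin N → X) → ℝ, (∀ z, 0 ≤ f z) → 0 ≤ Q f) →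
        Q (fun _ => 1) = 1 →
        (∀ f : (Fin N → X) → ℝ, P f ≤ Q f) →
        ∀ (f : (Fin N → X) → ℝ) (π : Equiv.Perm (Fin N)),
          Q (fun z => f (z ∘ π)) = Q f) := by
  have hP0 : P 0 = 0 := by
    have := h2 0 0 le_rfl
    simpa using this
  -- P f ≤ -P (-f)
  have hPle : ∀ f : (Fin N → X) → ℝ, P f ≤ -P (-f) := by
    intro f
    have := h3 f (-f)
    rw [add_neg_cancel, hP0] at this
    linarith
  constructor
  · intro hex Q hpos hnorm hdom f π
    have key : ∀ (f : (Fin N → X) → ℝ) (π : Equiv.Perm (Fin N)),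
        Q f ≤ Q (fun z => f (z ∘ π)) := by
      intro f π
      have h := (hex f π).trans (hdom (fun z => f (z ∘ π) - f z))
      have he : (fun z => f (z ∘ π) - f z) = (fun z => f (z ∘ π)) - f := rfl
      rw [he, Q.map_sub] at h
      linarith
    refine le_antisymm ?_ (key f π)
    have h := key (fun z => f (z ∘ π)) π⁻¹
    have he : (fun z => f ((z ∘ ⇑π⁻¹) ∘ π)) = f := by
      funext z
      congr 1
      funext x
      simp
    rwa [he] at h
  · intro hQ f π
    set g : (Fin N → X) → ℝ := fun z => f (z ∘ π) - f z with hg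
    by_cases hg0 : g = 0
    · rw [hg0, hP0]
    · -- sublinear functional q
      set q : ((Fin N → X) → ℝ) → ℝ := fun h => -P (-h) with hq
      have q_hom : ∀ c : ℝ, 0 < c → ∀ x, q (c • x) = c * q x := by
        intro c hc x
        have : -(c • x) = c • (-x) := by rw [smul_neg]
        simp only [hq, this, h2 (-x) c hc.le]
        ring
      have q_add : ∀ x y, q (x + y) ≤ q x + q y := by
        intro x y
        have := h3 (-x) (-y)
        have he : -x + -y = -(x + y) := by ring
        rw [he] at this
        simp only [hq]
        linarith
      -- partial linear map on span of g
      obtain ⟨Q, hQext, hQle⟩ :=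
        exists_extension_of_le_sublinear (LinearPMap.mkSpanSingleton g (P g) hg0) q
          q_hom q_add
          (by
            rintro ⟨x, hx⟩
            have hx' := hx
            rw [LinearPMap.domain_mkSpanSingleton, Submodule.mem_span_singleton] at hx'
            obtain ⟨c, rfl⟩ := hx'
            have happ : (LinearPMap.mkSpanSingleton g (P g) hg0) ⟨c • g, hx⟩
                = c • P g := LinearPMap.mkSpanSingleton'_apply _ _ _ c _
            rw [happ]
            rcases lt_trichotomy c 0 with hc | hc | hc
            · have : q (c • g) = -c * q (-g) := by
                have : c • g = (-c) • (-g) := by simp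
                rw [this, q_hom (-c) (by linarith) (-g)]
              rw [this]
              have h1' : P g ≤ q g := hPle g
              have h2' : q (-g) = -P g := by simp [hq]
              rw [h2']
              simp only [smul_eq_mul]
              nlinarith
            · subst hc; simp [hq, hP0]
            · rw [q_hom c hc g]
              have h1' : P g ≤ q g := hPle g
              simp only [smul_eq_mul]
              nlinarith)
      -- Q dominates P
      have hQdom : ∀ h : (Fin N → X) → ℝ, P h ≤ Q h := by
        intro h
        have := hQle (-h)
        have hqn : q (-h) = -P h := by simp [hq]
        rw [hqn, map_neg] at this
        linarith
      -- Q is positive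
      have hQpos : ∀ h : (Fin N → X) → ℝ, (∀ z, 0 ≤ h z) → 0 ≤ Q h := by
        intro h hh
        have := (h1 h).trans (hQdom h)
        refine le_trans ?_ this
        exact le_ciInf hh
      -- Q is normed
      have hQnorm : Q (fun _ => 1) = 1 := by
        have hge : (1 : ℝ) ≤ Q (fun _ => 1) := by
          have := (h1 (fun _ => 1)).trans (hQdom (fun _ => 1))
          simpa using this
        have hle : Q (fun _ => 1) ≤ 1 := by
          have := hQle (fun _ => 1)
          have hq1 : q (fun _ => (1 : ℝ)) ≤ 1 := by
            have := h1 (-(fun _ => (1 : ℝ)))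
            simp only [hq]
            have : (-1 : ℝ) ≤ P (-(fun _ => (1 : ℝ))) := by
              have h' := h1 (-(fun _ => (1 : ℝ)))
              simpa using h'
            linarith
          linarith
        linarith
      -- value at g
      have hQg : Q g = P g := by
        have := hQext ⟨g, Submodule.mem_span_singleton_self g⟩
        rw [this]
        exact LinearPMap.mkSpanSingleton'_apply_self _ _ _ _
      have hQex := hQ Q hQpos hQnorm hQdom f π
      have he : g = (fun z => f (z ∘ π)) - f := rfl
      have hQg0 : Q g = 0 := by rw [he, Q.map_sub, hQex, sub_self]
      rw [← hQg, hQg0]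
end

section
/- A coherent lower prevision P^N on L(X^N) is exchangeable if and only if there is a coherent lower prevision Q on L(N^N) such that P^N(f) = Q(MuHy^N(f|·)) for all gambles f on X^N; moreover, in that case Q is necessarily given by Q(h) = P^N(h ∘ T^N). -/
/-- The counting map: `countVec z x` is the number of indices `k` with `z k = x`. -/
def countVec {X : Type*} [DecidableEq X] {N : ℕ} (z : Fin N → X) : X → ℕ :=
  fun x => (Finset.univ.filter fun k => z k = x).card

lemma sum_countVec {X : Type*} [Fintype X] [DecidableEq X] {N : ℕ} (z : Fin N → X) :
    ∑ x, countVec z x = N := by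
  classical
  have h := Finset.card_eq_sum_card_fiberwise
    (s := (Finset.univ : Finset (Fin N))) (t := (Finset.univ : Finset X)) (f := z)
    (fun k _ => Finset.mem_univ _)
  simpa [countVec] using h.symm

/-- The multiple hypergeometric linear prevision: the uniform average of the gamble `f`
over the invariant atom `[m] = {z : T^N(z) = m}`. -/
noncomputable def MuHy {X : Type*} [Fintype X] [DecidableEq X] {N : ℕ}
    (f : (Fin N → X) → ℝ) (m : X → ℕ) : ℝ :=
  (∑ z ∈ Finset.univ.filter fun z : Fin N → X => countVec z = m, f z)
    / (Finset.univ.filter fun z : Fin N → X => countVec z = m).card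

lemma countVec_comp {X : Type*} [DecidableEq X] {N : ℕ} (z : Fin N → X)
    (π : Equiv.Perm (Fin N)) : countVec (z ∘ π) = countVec z := by
  funext x
  unfold countVec
  apply Finset.card_bij (fun k _ => π k)
  · intro a ha; simp at ha ⊢; exact ha
  · intro a _ b _ hab; exact π.injective hab
  · intro b hb; exact ⟨π.symm b, by simp at hb ⊢; simpa using hb, by simp⟩

lemma exists_countVec {X : Type*} [Fintype X] [DecidableEq X] {N : ℕ} (m : X → ℕ)
    (hm : ∑ x, m x = N) : ∃ z : Fin N → X, countVec z = m := by
  classical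
  have hc : Fintype.card (Σ x : X, Fin (m x)) = Fintype.card (Fin N) := by
    simp [Fintype.card_sigma, hm]
  let e : (Σ x : X, Fin (m x)) ≃ Fin N := Fintype.equivOfCardEq hc
  refine ⟨fun k => (e.symm k).1, ?_⟩
  funext x
  have h1 : countVec (fun k => (e.symm k).1) x
      = Fintype.card {k : Fin N // (e.symm k).1 = x} := (Fintype.card_subtype _).symm
  rw [h1]
  have e2 : {k : Fin N // (e.symm k).1 = x} ≃ {p : Σ y : X, Fin (m y) // p.1 = x} :=
    e.symm.subtypeEquiv (fun k => Iff.rfl)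
  have e3 : {p : Σ y : X, Fin (m y) // p.1 = x} ≃ Fin (m x) :=
    { toFun := fun p => p.prop ▸ p.val.2
      invFun := fun b => ⟨⟨x, b⟩, rfl⟩
      left_inv := by rintro ⟨⟨y, b⟩, rfl⟩; rfl
      right_inv := fun b => rfl }
  rw [Fintype.card_congr (e2.trans e3), Fintype.card_fin]

lemma exists_perm {X : Type*} [DecidableEq X] {N : ℕ} (z w : Fin N → X)
    (h : countVec w = countVec z) : ∃ π : Equiv.Perm (Fin N), z ∘ π = w := by
  classical
  have hcard : ∀ x, Fintype.card {k : Fin N // w k = x} = Fintype.card {k : Fin N // z k = x} := by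
    intro x
    have := congrFun h x
    simpa [countVec, Fintype.card_subtype] using this
  let e : ∀ x, {k : Fin N // w k = x} ≃ {k : Fin N // z k = x} :=
    fun x => Fintype.equivOfCardEq (hcard x)
  let π : Fin N ≃ Fin N :=
    ((Equiv.sigmaFiberEquiv w).symm.trans (Equiv.sigmaCongrRight e)).trans
      (Equiv.sigmaFiberEquiv z)
  refine ⟨π, funext fun k => ?_⟩
  show z (π k) = w k
  have : π k = (e (w k) ⟨k, rfl⟩).1 := rfl
  rw [this]
  exact (e (w k) ⟨k, rfl⟩).2

lemma muHy_eq_symAvg {X : Type*} [Fintype X] [DecidableEq X] {N : ℕ}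
    (f : (Fin N → X) → ℝ) (z : Fin N → X) :
    MuHy f (countVec z)
      = (∑ π : Equiv.Perm (Fin N), f (z ∘ π)) / (Nat.factorial N : ℝ) := by
  classical
  set A := Finset.univ.filter fun w : Fin N → X => countVec w = countVec z with hA
  set c := (Finset.univ.filter fun π : Equiv.Perm (Fin N) => z ∘ π = z).card with hc
  have hfib : ∀ w ∈ A, (Finset.univ.filter fun π : Equiv.Perm (Fin N) => z ∘ π = w).card = c := by
    intro w hw
    simp only [hA, Finset.mem_filter, Finset.mem_univ, true_and] at hw
    obtain ⟨π₀, hπ₀⟩ := exists_perm z w hw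
    rw [hc]
    apply Finset.card_bij (fun σ _ => π₀.symm.trans σ)
    · intro σ hσ
      simp only [Finset.mem_filter, Finset.mem_univ, true_and] at hσ ⊢
      funext k
      show z (σ (π₀.symm k)) = z k
      have h1 : z (σ (π₀.symm k)) = w (π₀.symm k) := congrFun hσ (π₀.symm k)
      rw [h1, ← hπ₀]; simp
    · intro a _ b _ hab
      have h' := congrArg (fun t => π₀.trans t) hab
      calc a = π₀.trans (π₀.symm.trans a) := by ext k; simp
        _ = π₀.trans (π₀.symm.trans b) := h'
        _ = b := by ext k; simp
    · intro τ hτ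
      simp only [Finset.mem_filter, Finset.mem_univ, true_and] at hτ
      refine ⟨π₀.trans τ, ?_, ?_⟩
      · simp only [Finset.mem_filter, Finset.mem_univ, true_and]
        funext k
        show z (τ (π₀ k)) = w k
        have := congrFun hτ (π₀ k)
        simp only [Function.comp_apply] at this
        rw [this, ← hπ₀]; rfl
      · ext k; simp
  have hgroup : ∀ g : (Fin N → X) → ℝ,
      ∑ π : Equiv.Perm (Fin N), g (z ∘ π) = ∑ w ∈ A, (c : ℝ) * g w := by
    intro g
    have hmaps : ∀ π ∈ (Finset.univ : Finset (Equiv.Perm (Fin N))), z ∘ π ∈ A := by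
      intro π _; simp [hA, countVec_comp]
    have := Finset.sum_fiberwise_of_maps_to (g := fun π : Equiv.Perm (Fin N) => z ∘ π)
      (f := fun π : Equiv.Perm (Fin N) => g (z ∘ π)) hmaps
    rw [← this]
    refine Finset.sum_congr rfl fun w hw => ?_
    rw [Finset.sum_congr rfl (fun π hπ => ?_), Finset.sum_const, hfib w hw,
      nsmul_eq_mul]
    · simp only [Finset.mem_filter] at hπ
      rw [hπ.2]
  have hcount : (Nat.factorial N : ℝ) = A.card * c := by
    have h1 := hgroup (fun _ => (1 : ℝ))
    simp only [mul_one, Finset.sum_const, nsmul_eq_mul, Finset.card_univ,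
      Fintype.card_perm, Fintype.card_fin] at h1
    rw [h1]
  have hz : z ∈ A := by simp [hA]
  have hAcard : (0:ℝ) < A.card := by
    exact_mod_cast Finset.card_pos.mpr ⟨z, hz⟩
  have hcpos : (0:ℝ) < c := by
    have hmem : (1 : Equiv.Perm (Fin N)) ∈ Finset.univ.filter fun π : Equiv.Perm (Fin N) => z ∘ π = z := by
      simp only [Finset.mem_filter, Finset.mem_univ, true_and]
      rfl
    exact_mod_cast Finset.card_pos.mpr ⟨_, hmem⟩
  rw [hgroup f, ← Finset.mul_sum, hcount, MuHy]
  field_simp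
  ring

/-- Representation theorem for finite exchangeable sequences: a coherent lower
prevision `P` on `L(X^N)` is exchangeable iff it is of the form `P f = Q (MuHy^N(f|·))` for
some coherent lower prevision `Q` on the gambles on the set of count vectors; moreover such a
`Q` is necessarily given by `Q h = P (h ∘ T^N)`. -/
theorem finite_representation_theorem
    {X : Type*} [Fintype X] [DecidableEq X] [Nonempty X] {N : ℕ} (hN : 1 ≤ N)
    (P : ((Fin N → X) → ℝ) → ℝ)
    (h1 : ∀ f : (Fin N → X) → ℝ, (⨅ z, f z) ≤ P f)
    (h2 : ∀ f : (Fin N → X) → ℝ, ∀ c : ℝ, 0 ≤ c → P (c • f) = c * P f)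
    (h3 : ∀ f g : (Fin N → X) → ℝ, P f + P g ≤ P (f + g)) :
    ((∀ (f : (Fin N → X) → ℝ) (π : Equiv.Perm (Fin N)),
        0 ≤ P (fun z => f (z ∘ π) - f z)) ↔
      (∃ Q : ({m : X → ℕ // ∑ x, m x = N} → ℝ) → ℝ,
        ((∀ h : {m : X → ℕ // ∑ x, m x = N} → ℝ, (⨅ m, h m) ≤ Q h) ∧
         (∀ h : {m : X → ℕ // ∑ x, m x = N} → ℝ, ∀ c : ℝ, 0 ≤ c → Q (c • h) = c * Q h) ∧
         (∀ h g : {m : X → ℕ // ∑ x, m x = N} → ℝ, Q h + Q g ≤ Q (h + g))) ∧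
        (∀ f : (Fin N → X) → ℝ, P f = Q (fun m => MuHy f m.val)))) ∧
    (∀ Q : ({m : X → ℕ // ∑ x, m x = N} → ℝ) → ℝ,
      ((∀ h : {m : X → ℕ // ∑ x, m x = N} → ℝ, (⨅ m, h m) ≤ Q h) ∧
       (∀ h : {m : X → ℕ // ∑ x, m x = N} → ℝ, ∀ c : ℝ, 0 ≤ c → Q (c • h) = c * Q h) ∧
       (∀ h g : {m : X → ℕ // ∑ x, m x = N} → ℝ, Q h + Q g ≤ Q (h + g))) →
      (∀ f : (Fin N → X) → ℝ, P f = Q (fun m => MuHy f m.val)) →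
      ∀ h : {m : X → ℕ // ∑ x, m x = N} → ℝ,
        Q h = P (fun z => h ⟨countVec z, sum_countVec z⟩)) := by
  classical
  -- P of zero
  have P0 : P 0 = 0 := by
    have := h2 0 0 le_rfl
    simpa using this
  -- superadditivity over finite sums
  have psum : ∀ {ι : Type} (s : Finset ι) (F : ι → ((Fin N → X) → ℝ)),
      ∑ i ∈ s, P (F i) ≤ P (∑ i ∈ s, F i) := by
    intro ι s F
    induction s using Finset.cons_induction with
    | empty => simp [P0]
    | cons a s ha ih =>
      rw [Finset.sum_cons, Finset.sum_cons]
      calc P (F a) + ∑ i ∈ s, P (F i) ≤ P (F a) + P (∑ i ∈ s, F i) := by linarith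
        _ ≤ P (F a + ∑ i ∈ s, F i) := h3 _ _
  -- MuHy of the zero-average gambles vanish
  -- key: under exchangeability, P (MuHy f ∘ T) = P f
  have key : (∀ (f : (Fin N → X) → ℝ) (π : Equiv.Perm (Fin N)),
        0 ≤ P (fun z => f (z ∘ π) - f z)) →
      ∀ f : (Fin N → X) → ℝ, P (fun z => MuHy f (countVec z)) = P f := by
    intro exch f
    set g : (Fin N → X) → ℝ := fun z => MuHy f (countVec z) with hg
    have hfac : (0:ℝ) < (Nat.factorial N : ℝ) := by
      exact_mod_cast Nat.factorial_pos N
    set r : ℝ := ((Nat.factorial N : ℝ))⁻¹ with hr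
    have hrpos : 0 ≤ r := by positivity
    have hfne : (Nat.factorial N : ℝ) ≠ 0 := ne_of_gt hfac
    -- g - f as symmetrized combination
    have hgf : (fun z => g z - f z)
        = r • ∑ π : Equiv.Perm (Fin N), (fun z => f (z ∘ π) - f z) := by
      funext z
      have h0 := muHy_eq_symAvg f z
      simp only [Pi.smul_apply, Finset.sum_apply, smul_eq_mul]
      rw [hg]
      simp only [h0, Finset.sum_sub_distrib, Finset.sum_const, Finset.card_univ,
        Fintype.card_perm, Fintype.card_fin, nsmul_eq_mul]
      rw [hr, div_eq_inv_mul, mul_sub, inv_mul_cancel_left₀ hfne]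
    have hfg : (fun z => f z - g z)
        = r • ∑ π : Equiv.Perm (Fin N), (fun z => f z - f (z ∘ π)) := by
      funext z
      have h0 := muHy_eq_symAvg f z
      simp only [Pi.smul_apply, Finset.sum_apply, smul_eq_mul]
      rw [hg]
      simp only [h0, Finset.sum_sub_distrib, Finset.sum_const, Finset.card_univ,
        Fintype.card_perm, Fintype.card_fin, nsmul_eq_mul]
      rw [hr, div_eq_inv_mul, mul_sub, inv_mul_cancel_left₀ hfne]
    have exch' : ∀ π : Equiv.Perm (Fin N), 0 ≤ P (fun z => f z - f (z ∘ π)) := by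
      intro π
      have := exch (fun z => f (z ∘ π)) π.symm
      have heq : (fun z => (fun w => f (w ∘ π)) (z ∘ π.symm) - (fun w => f (w ∘ π)) z)
          = (fun z => f z - f (z ∘ π)) := by
        funext z
        simp only
        congr 1
        congr 1
        funext k
        simp
      rwa [heq] at this
    have hPgf : 0 ≤ P (fun z => g z - f z) := by
      rw [hgf, h2 _ r hrpos]
      have : (0:ℝ) ≤ P (∑ π : Equiv.Perm (Fin N), (fun z => f (z ∘ π) - f z)) := by
        refine le_trans ?_ (psum Finset.univ _)
        exact Finset.sum_nonneg fun π _ => exch _ π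
      positivity
    have hPfg : 0 ≤ P (fun z => f z - g z) := by
      rw [hfg, h2 _ r hrpos]
      have : (0:ℝ) ≤ P (∑ π : Equiv.Perm (Fin N), (fun z => f z - f (z ∘ π))) := by
        refine le_trans ?_ (psum Finset.univ _)
        exact Finset.sum_nonneg fun π _ => exch' π
      positivity
    have h4 : P f + P (fun z => g z - f z) ≤ P g := by
      have := h3 f (fun z => g z - f z)
      have heq : (f + fun z => g z - f z) = g := by funext z; simp
      rwa [heq] at this
    have h5 : P g + P (fun z => f z - g z) ≤ P f := by
      have := h3 g (fun z => f z - g z)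
      have heq : (g + fun z => f z - g z) = f := by funext z; simp
      rwa [heq] at this
    linarith
  constructor
  · constructor
    · -- forward: exchangeable → representation
      intro exch
      refine ⟨fun h => P (fun z => h ⟨countVec z, sum_countVec z⟩), ⟨?_, ?_, ?_⟩, ?_⟩
      · intro h
        haveI : Finite {m : X → ℕ // ∑ x, m x = N} := by
          apply Finite.of_injective
            (fun m : {m : X → ℕ // ∑ x, m x = N} =>
              (fun x => (⟨m.val x, by
                have hle : m.val x ≤ ∑ y, m.val y :=
                  Finset.single_le_sum (fun y _ => Nat.zero_le _) (Finset.mem_univ x)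
                rw [m.prop] at hle
                exact Nat.lt_succ_of_le hle⟩ : Fin (N+1))))
          intro a b hab
          ext x
          exact congrArg Fin.val (congrFun hab x)
        refine le_trans ?_ (h1 _)
        refine le_ciInf fun z => ?_
        exact ciInf_le (Set.finite_range h).bddBelow _
      · intro h c hc
        exact h2 _ c hc
      · intro h g
        exact h3 _ _
      · intro f
        exact (key exch f).symm
    · -- converse: representation → exchangeable
      rintro ⟨Q, ⟨q1, q2, q3⟩, rep⟩ f π
      have Q0 : Q 0 = 0 := by
        have := q2 0 0 le_rfl
        simpa using this
      have hzero : (fun m : {m : X → ℕ // ∑ x, m x = N} =>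
          MuHy (fun z => f (z ∘ π) - f z) m.val) = 0 := by
        funext m
        show MuHy (fun z => f (z ∘ π) - f z) m.val = 0
        unfold MuHy
        have hnum : ∑ z ∈ Finset.univ.filter fun z : Fin N → X => countVec z = m.val,
            (f (z ∘ π) - f z) = 0 := by
          rw [Finset.sum_sub_distrib]
          have : ∑ z ∈ Finset.univ.filter fun z : Fin N → X => countVec z = m.val, f (z ∘ π)
              = ∑ z ∈ Finset.univ.filter fun z : Fin N → X => countVec z = m.val, f z := by
            apply Finset.sum_nbij' (i := fun z => z ∘ π) (j := fun z => z ∘ π.symm)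
            · intro a ha
              simp only [Finset.mem_filter, Finset.mem_univ, true_and] at ha ⊢
              rw [countVec_comp]; exact ha
            · intro a ha
              simp only [Finset.mem_filter, Finset.mem_univ, true_and] at ha ⊢
              rw [show a ∘ ⇑π.symm = a ∘ ⇑(π.symm : Equiv.Perm (Fin N)) from rfl,
                countVec_comp]
              exact ha
            · intro a _; funext k; simp
            · intro a _; funext k; simp
            · intro a _; rfl
          rw [this, sub_self]
        rw [hnum, zero_div]
      rw [rep, hzero, Q0]
  · -- uniqueness
    rintro Q ⟨q1, q2, q3⟩ rep h
    have := rep (fun z => h ⟨countVec z, sum_countVec z⟩)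
    have heq : (fun m : {m : X → ℕ // ∑ x, m x = N} =>
        MuHy (fun z => h ⟨countVec z, sum_countVec z⟩) m.val) = h := by
      funext m
      show MuHy (fun z => h ⟨countVec z, sum_countVec z⟩) m.val = h m
      obtain ⟨z₀, hz₀⟩ := exists_countVec m.val m.prop
      unfold MuHy
      have hmem : z₀ ∈ Finset.univ.filter fun z : Fin N → X => countVec z = m.val := by
        simp [hz₀]
      have hpos : (0:ℝ) < (Finset.univ.filter fun z : Fin N → X => countVec z = m.val).card := by
        exact_mod_cast Finset.card_pos.mpr ⟨z₀, hmem⟩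
      have hconst : ∑ z ∈ Finset.univ.filter fun z : Fin N → X => countVec z = m.val,
          h ⟨countVec z, sum_countVec z⟩
          = (Finset.univ.filter fun z : Fin N → X => countVec z = m.val).card • h m := by
        rw [← Finset.sum_const]
        refine Finset.sum_congr rfl fun z hz => ?_
        simp only [Finset.mem_filter, Finset.mem_univ, true_and] at hz
        congr 1
        exact Subtype.ext hz
      rw [hconst, nsmul_eq_mul]
      field_simp
    rw [heq] at this
    exact this.symm
end

section
/- Degree elevation of Bernstein representations (Zhou's formula): if p = Σ_{m∈N^n} b(m)·B_m on Σ, then also p = Σ_{μ∈N^{n+k}} b'(μ)·B_μ, where b'(μ) = Σ_{m∈N^n, m≤μ} (ν(m)·ν(μ−m)/ν(μ))·b(m). -/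
/-- The multinomial coefficient `ν(m) = (Σ_x m_x)! / ∏_x m_x!`. -/
def nu {X : Type*} [Fintype X] (m : X → ℕ) : ℕ :=
  (∑ x, m x).factorial / ∏ x, (m x).factorial

/-- The set of count vectors `N^n = {m ∈ ℕ^X : Σ_x m_x = n}`, as a finset. -/
def NN (X : Type*) [Fintype X] [DecidableEq X] (n : ℕ) : Finset (X → ℕ) :=
  (Fintype.piFinset fun _ : X => Finset.range (n + 1)).filter fun m => ∑ x, m x = n

/-- The degree-`n` Bernstein basis polynomial `B_m(θ) = ν(m)·∏_x θ_x^{m_x}`. -/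
noncomputable def bern {X : Type*} [Fintype X] (m : X → ℕ) (θ : X → ℝ) : ℝ :=
  (nu m : ℝ) * ∏ x, θ x ^ m x

lemma nu_eq_multinomial {X : Type*} [Fintype X] (m : X → ℕ) :
    nu m = Nat.multinomial Finset.univ m := rfl

lemma mem_NN_iff {X : Type*} [Fintype X] [DecidableEq X] {n : ℕ} {m : X → ℕ} :
    m ∈ NN X n ↔ ∑ x, m x = n := by
  simp only [NN, Finset.mem_filter, Fintype.mem_piFinset, Finset.mem_range, Nat.lt_succ_iff]
  constructor
  · exact fun h => h.2
  · intro h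
    refine ⟨fun x => ?_, h⟩
    rw [← h]
    exact Finset.single_le_sum (fun i _ => Nat.zero_le _) (Finset.mem_univ x)

lemma NN_eq_piAntidiag {X : Type*} [Fintype X] [DecidableEq X] (n : ℕ) :
    NN X n = Finset.piAntidiag Finset.univ n := by
  ext m
  rw [mem_NN_iff, Finset.mem_piAntidiag]
  exact ⟨fun h => ⟨h, fun i _ => Finset.mem_univ i⟩, fun h => h.1⟩

/-- Degree elevation (Zhou's formula): if `p = Σ_{m∈N^n} b(m)·B_m` on the
simplex, then also `p = Σ_{μ∈N^{n+k}} b'(μ)·B_μ` with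
`b'(μ) = Σ_{m∈N^n, m≤μ} (ν(m)·ν(μ−m)/ν(μ))·b(m)`. -/
theorem bernstein_degree_elevation
    {X : Type*} [Fintype X] [DecidableEq X] [Nonempty X] (n k : ℕ)
    (b : (X → ℕ) → ℝ)
    (θ : X → ℝ) (hθ0 : ∀ x, 0 ≤ θ x) (hθ1 : ∑ x, θ x = 1) :
    ∑ m ∈ NN X n, b m * bern m θ
      = ∑ μ ∈ NN X (n + k),
          (∑ m ∈ (NN X n).filter fun m => ∀ x, m x ≤ μ x,
            ((nu m : ℝ) * nu (μ - m) / nu μ) * b m) * bern μ θ := by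
  classical
  -- common form
  have lhs_eq :
      ∑ m ∈ NN X n, b m * bern m θ
        = ∑ p ∈ (NN X n).sigma (fun _ => NN X k),
            b p.1 * ((nu p.1 : ℝ) * nu p.2) * ∏ x, θ x ^ (p.1 x + p.2 x) := by
    rw [Finset.sum_sigma]
    refine Finset.sum_congr rfl fun m _ => ?_
    have hpow : (1 : ℝ) = (∑ x, θ x) ^ k := by rw [hθ1, one_pow]
    calc b m * bern m θ = b m * bern m θ * (∑ x, θ x) ^ k := by rw [← hpow, mul_one]
      _ = b m * bern m θ *
            ∑ r ∈ NN X k, (nu r : ℝ) * ∏ x, θ x ^ r x := by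
          rw [Finset.sum_pow_eq_sum_piAntidiag, ← NN_eq_piAntidiag]
          congr 1
      _ = ∑ r ∈ NN X k, b m * ((nu m : ℝ) * nu r) * ∏ x, θ x ^ (m x + r x) := by
          rw [Finset.mul_sum]
          refine Finset.sum_congr rfl fun r _ => ?_
          simp only [bern, pow_add, Finset.prod_mul_distrib]
          ring
  rw [lhs_eq]
  -- RHS as a sigma sum
  have rhs_eq :
      ∑ μ ∈ NN X (n + k),
          (∑ m ∈ (NN X n).filter fun m => ∀ x, m x ≤ μ x,
            ((nu m : ℝ) * nu (μ - m) / nu μ) * b m) * bern μ θ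
        = ∑ p ∈ (NN X (n + k)).sigma
              (fun μ => (NN X n).filter fun m => ∀ x, m x ≤ μ x),
            b p.2 * ((nu p.2 : ℝ) * nu (p.1 - p.2)) * ∏ x, θ x ^ p.1 x := by
    rw [Finset.sum_sigma]
    refine Finset.sum_congr rfl fun μ _ => ?_
    rw [Finset.sum_mul]
    refine Finset.sum_congr rfl fun m _ => ?_
    have hν : (nu μ : ℝ) ≠ 0 := by
      rw [nu_eq_multinomial]
      exact_mod_cast (Nat.multinomial_pos _ _).ne'
    simp only [bern]
    field_simp
  rw [rhs_eq]
  -- bijection between the two sigma sums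
  refine Finset.sum_nbij' (fun p => ⟨p.1 + p.2, p.1⟩) (fun q => ⟨q.2, q.1 - q.2⟩)
    ?_ ?_ ?_ ?_ ?_
  · rintro ⟨m, r⟩ hp
    simp only [Finset.mem_sigma, mem_NN_iff] at hp
    obtain ⟨hm, hr⟩ := hp
    simp only [Finset.mem_sigma, Finset.mem_filter, mem_NN_iff]
    exact ⟨by simp [Finset.sum_add_distrib, hm, hr], hm, fun x => Nat.le_add_right _ _⟩
  · rintro ⟨μ, m⟩ hq
    simp only [Finset.mem_sigma, Finset.mem_filter, mem_NN_iff] at hq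
    obtain ⟨hμ, hm, hle⟩ := hq
    simp only [Finset.mem_sigma, mem_NN_iff]
    refine ⟨hm, ?_⟩
    have : ∑ x, (μ - m) x = (∑ x, μ x) - ∑ x, m x := by
      simp only [Pi.sub_apply]
      exact Finset.sum_tsub_distrib Finset.univ (fun x _ => hle x)
    rw [this, hμ, hm, Nat.add_sub_cancel_left]
  · rintro ⟨m, r⟩ hp
    simp only
    congr 1
    funext x
    simp [Pi.sub_apply, Pi.add_apply]
  · rintro ⟨μ, m⟩ hq
    simp only [Finset.mem_sigma, Finset.mem_filter] at hq
    obtain ⟨hμ, hm, hle⟩ := hq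
    simp only
    congr 1
    funext x
    simp [Pi.sub_apply, Nat.add_sub_cancel' (hle x)]
  · rintro ⟨m, r⟩ hp
    simp [Pi.add_apply, Pi.sub_apply]
end
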